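/- Let d ≥ 1, let S ⊆ ℝ^d_d be a countable set of points in d-general position, let m ≤ d, let u₁, …, u_m be (distinct) points of S, and let c₁, …, c_m be arbitrary real numbers. Then there exists a point u₀ ∈ ℝ^d_d such that ⟨u₀ − uᵢ, u₀ − uᵢ⟩ = cᵢ for every 1 ≤ i ≤ m, and such that the set S ∪ {u₀} is in d-general position. -/

import Mathlib

/-- The Minkowski space `ℝ^d_d`. -/
abbrev Mink (d : ℕ) :=
  EuclideanSpace ℝ (Fin d) × EuclideanSpace ℝ (Fin d)

/-- The indefinite bilinear form of signature `(d, d)` on `Mink d`. -/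
noncomputable def mform (d : ℕ) (u v : Mink d) : ℝ :=
  inner ℝ u.1 v.1 - inner ℝ u.2 v.2

/-- A set `S` of points of a real vector space is in `d`-general position if every
subset of `S` with at most `d + 1` elements is affinely independent. -/
def InGenPos (d : ℕ) {W : Type*} [AddCommGroup W] [Module ℝ W] (S : Set W) : Prop :=
  ∀ t : Finset W, ↑t ⊆ S → t.card ≤ d + 1 → AffineIndependent ℝ (fun x : t => (x : W))

open Module

namespace SVEaux

variable {d : ℕ}

lemma mform_add_left (u v w : Mink d) :
    mform d (u + v) w = mform d u w + mform d v w := by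
  simp only [mform, Prod.fst_add, Prod.snd_add, inner_add_left]; ring

lemma mform_add_right (u v w : Mink d) :
    mform d u (v + w) = mform d u v + mform d u w := by
  simp only [mform, Prod.fst_add, Prod.snd_add, inner_add_right]; ring

lemma mform_smul_left (t : ℝ) (u v : Mink d) :
    mform d (t • u) v = t * mform d u v := by
  simp only [mform, Prod.smul_fst, Prod.smul_snd, real_inner_smul_left]; ring

lemma mform_smul_right (t : ℝ) (u v : Mink d) :
    mform d u (t • v) = t * mform d u v := by
  simp only [mform, Prod.smul_fst, Prod.smul_snd, real_inner_smul_right]; ring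

/-- The Minkowski form as a bilinear map. -/
noncomputable def B (d : ℕ) : (Mink d) →ₗ[ℝ] (Mink d) →ₗ[ℝ] ℝ :=
  LinearMap.mk₂ ℝ (mform d) mform_add_left
    (fun a u v => by rw [mform_smul_left]; rfl)
    mform_add_right
    (fun a u v => by rw [mform_smul_right]; rfl)

@[simp] lemma B_apply (u v : Mink d) : B d u v = mform d u v := rfl

lemma mform_comm (u v : Mink d) : mform d u v = mform d v u := by
  simp only [mform]
  rw [real_inner_comm u.1, real_inner_comm u.2]

lemma mform_add_self (a b : Mink d) :
    mform d (a + b) (a + b)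
      = mform d a a + 2 * mform d a b + mform d b b := by
  rw [mform_add_left, mform_add_right, mform_add_right, mform_comm b a]; ring

lemma mform_sub_self (a b : Mink d) :
    mform d (a - b) (a - b)
      = mform d a a - 2 * mform d a b + mform d b b := by
  simp only [mform, Prod.fst_sub, Prod.snd_sub, inner_sub_left, inner_sub_right]
  rw [real_inner_comm b.1 a.1, real_inner_comm b.2 a.2]
  ring

lemma mform_zero_self : mform d (0 : Mink d) 0 = 0 := by simp [mform]

lemma mform_nondeg (z : Mink d) (h : ∀ w, mform d z w = 0) : z = 0 := by
  have h1 := h (z.1, -z.2)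
  simp only [mform, inner_neg_right] at h1
  have hz1 : (0:ℝ) ≤ inner ℝ z.1 z.1 := real_inner_self_nonneg
  have hz2 : (0:ℝ) ≤ inner ℝ z.2 z.2 := real_inner_self_nonneg
  have e1 : (inner ℝ z.1 z.1 : ℝ) = 0 := by linarith
  have e2 : (inner ℝ z.2 z.2 : ℝ) = 0 := by linarith
  have hp1 : z.1 = 0 := inner_self_eq_zero.mp e1
  have hp2 : z.2 = 0 := inner_self_eq_zero.mp e2
  exact Prod.ext hp1 hp2

lemma rankMink (d : ℕ) : finrank ℝ (Mink d) = 2 * d := by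
  simp only [Module.finrank_prod, finrank_euclideanSpace_fin]
  omega

/-- Surjectivity of the linear-constraint map. -/
lemma T_surj {k : ℕ} (v : Fin k → Mink d) (hv : LinearIndependent ℝ v) :
    Function.Surjective
      (LinearMap.pi (fun i => (B d).flip (v i)) : Mink d →ₗ[ℝ] (Fin k → ℝ)) := by
  classical
  set T : Mink d →ₗ[ℝ] (Fin k → ℝ) := LinearMap.pi (fun i => (B d).flip (v i)) with hT
  rw [← LinearMap.range_eq_top]
  by_contra hne
  have hlt : LinearMap.range T < ⊤ := lt_top_iff_ne_top.mpr hne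
  obtain ⟨f, hf0, hker⟩ := Submodule.exists_dual_map_eq_bot_of_lt_top hlt inferInstance
  have hvan : ∀ w : Mink d, f (T w) = 0 := by
    intro w
    have hmem : f (T w) ∈ Submodule.map f (LinearMap.range T) :=
      Submodule.mem_map_of_mem (LinearMap.mem_range_self T w)
    rw [hker] at hmem
    simpa using hmem
  set lam : Fin k → ℝ := fun i => f (Pi.single i 1) with hlam
  have hf_eq : ∀ x : Fin k → ℝ, f x = ∑ i, x i * lam i := by
    intro x
    have hx : x = ∑ i, x i • (Pi.single i (1:ℝ) : Fin k → ℝ) := by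
      funext j
      rw [Finset.sum_apply]
      simp [Pi.single_apply]
    conv_lhs => rw [hx]
    rw [map_sum]
    congr 1; funext i
    rw [map_smul]; simp [hlam, mul_comm]
  set z : Mink d := ∑ i, lam i • v i with hz
  have hzform : ∀ w : Mink d, mform d w z = 0 := by
    intro w
    have h1 : mform d w z = ∑ i, lam i * mform d w (v i) := by
      show (B d w) z = _
      rw [hz, map_sum]
      congr 1; funext i
      rw [map_smul]
      rfl
    have h2 := hvan w
    rw [hf_eq] at h2
    rw [h1, ← h2]
    congr 1; funext i
    have : T w i = mform d w (v i) := rfl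
    rw [this]; ring
  have hz0 : z = 0 := by
    apply mform_nondeg
    intro w
    rw [mform_comm]
    exact hzform w
  have hlam0 : ∀ i, lam i = 0 := by
    have := Fintype.linearIndependent_iff.mp hv lam (by rw [← hz, hz0])
    exact this
  apply hf0
  apply LinearMap.ext
  intro x
  rw [hf_eq]
  simp [hlam0]

/-- On any subspace of dimension `≥ d+1`, the Minkowski form attains negative values. -/
lemma exists_neg (W : Submodule ℝ (Mink d)) (hdim : d + 1 ≤ finrank ℝ W) :
    ∃ z ∈ W, mform d z z < 0 := by
  by_contra h
  push_neg at h
  set N : Submodule ℝ (Mink d) :=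
    LinearMap.ker (LinearMap.fst ℝ (EuclideanSpace ℝ (Fin d)) (EuclideanSpace ℝ (Fin d))) with hN
  have hdisj : W ⊓ N = ⊥ := by
    rw [Submodule.eq_bot_iff]
    rintro z ⟨hzW, hzN⟩
    have hz1 : z.1 = 0 := hzN
    have hq := h z hzW
    have hform : mform d z z = - inner ℝ z.2 z.2 := by
      simp [mform, hz1]
    have h2 : (inner ℝ z.2 z.2 : ℝ) ≤ 0 := by rw [hform] at hq; linarith
    have h3 : (0:ℝ) ≤ inner ℝ z.2 z.2 := real_inner_self_nonneg
    have hz2 : z.2 = 0 := inner_self_eq_zero.mp (le_antisymm h2 h3)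
    exact Prod.ext hz1 hz2
  have hNd : finrank ℝ ↥N = d := by
    have h1 := (LinearMap.fst ℝ (EuclideanSpace ℝ (Fin d)) (EuclideanSpace ℝ (Fin d))).finrank_range_add_finrank_ker
    have h2 : LinearMap.range (LinearMap.fst ℝ (EuclideanSpace ℝ (Fin d)) (EuclideanSpace ℝ (Fin d))) = ⊤ :=
      LinearMap.range_eq_top.mpr (fun a => ⟨(a, 0), rfl⟩)
    rw [h2, finrank_top, rankMink, finrank_euclideanSpace_fin, ← hN] at h1
    have h1' : d + finrank ℝ ↥N = 2 * d := h1
    omega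
  have h1 := Submodule.finrank_sup_add_finrank_inf_eq W N
  rw [hdisj, finrank_bot] at h1
  have h2 : finrank ℝ ↥(W ⊔ N) ≤ 2 * d := by
    have := Submodule.finrank_le (W ⊔ N)
    rwa [rankMink] at this
  omega

/-- On any subspace of dimension `≥ d+1`, the Minkowski form attains positive values. -/
lemma exists_pos (W : Submodule ℝ (Mink d)) (hdim : d + 1 ≤ finrank ℝ W) :
    ∃ z ∈ W, 0 < mform d z z := by
  by_contra h
  push_neg at h
  set N : Submodule ℝ (Mink d) :=
    LinearMap.ker (LinearMap.snd ℝ (EuclideanSpace ℝ (Fin d)) (EuclideanSpace ℝ (Fin d))) with hN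
  have hdisj : W ⊓ N = ⊥ := by
    rw [Submodule.eq_bot_iff]
    rintro z ⟨hzW, hzN⟩
    have hz2 : z.2 = 0 := hzN
    have hq := h z hzW
    have hform : mform d z z = inner ℝ z.1 z.1 := by
      simp [mform, hz2]
    have h2 : (inner ℝ z.1 z.1 : ℝ) ≤ 0 := by rw [hform] at hq; linarith
    have h3 : (0:ℝ) ≤ inner ℝ z.1 z.1 := real_inner_self_nonneg
    have hz1 : z.1 = 0 := inner_self_eq_zero.mp (le_antisymm h2 h3)
    exact Prod.ext hz1 hz2
  have hNd : finrank ℝ ↥N = d := by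
    have h1 := (LinearMap.snd ℝ (EuclideanSpace ℝ (Fin d)) (EuclideanSpace ℝ (Fin d))).finrank_range_add_finrank_ker
    have h2 : LinearMap.range (LinearMap.snd ℝ (EuclideanSpace ℝ (Fin d)) (EuclideanSpace ℝ (Fin d))) = ⊤ :=
      LinearMap.range_eq_top.mpr (fun a => ⟨(0, a), rfl⟩)
    rw [h2, finrank_top, rankMink, finrank_euclideanSpace_fin, ← hN] at h1
    have h1' : d + finrank ℝ ↥N = 2 * d := h1
    omega
  have h1 := Submodule.finrank_sup_add_finrank_inf_eq W N
  rw [hdisj, finrank_bot] at h1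
  have h2 : finrank ℝ ↥(W ⊔ N) ≤ 2 * d := by
    have := Submodule.finrank_le (W ⊔ N)
    rwa [rankMink] at this
  omega

/-- A positive value of a quadratic with positive leading coefficient. -/
lemma quad_pos {a b c : ℝ} (ha : 0 < a) : ∃ t : ℝ, 0 < a * t ^ 2 + b * t + c := by
  refine ⟨max 1 ((1 + |b| + |c|) / a), ?_⟩
  set t := max 1 ((1 + |b| + |c|) / a) with hts
  have ht1 : 1 ≤ t := le_max_left _ _
  have ht2 : (1 + |b| + |c|) / a ≤ t := le_max_right _ _
  have hat : 1 + |b| + |c| ≤ a * t := by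
    rw [div_le_iff₀ ha] at ht2
    linarith [ht2]
  have hb1 : -b ≤ |b| := neg_le_abs b
  have hc1 : -c ≤ |c| := neg_le_abs c
  have ht0 : (0:ℝ) ≤ t := by linarith
  have k1 : 0 ≤ (|b| + b) * t := mul_nonneg (by linarith) ht0
  have k2 : |c| ≤ |c| * t := le_mul_of_one_le_right (abs_nonneg c) ht1
  nlinarith [mul_le_mul_of_nonneg_right hat ht0, k1, k2]

/-- Countably many low-dimensional affine subspaces can be avoided on the
parametrized surface `x ↦ p + φ x + σ x • n`. -/
lemma avoid {K : ℕ} (S : Set (Mink d)) (hS : S.Countable)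
    (p n : Mink d) (φ : (Fin K → ℝ) →ₗ[ℝ] Mink d) (σ : (Fin K → ℝ) → ℝ)
    (hσ : Continuous σ)
    (hdim : d + 1 ≤ finrank ℝ ↥(LinearMap.range φ ⊔ Submodule.span ℝ {n}))
    (x₀ : Fin K → ℝ) {r : ℝ} (hr : 0 < r) :
    ∃ x ∈ Metric.closedBall x₀ r, ∀ t : Finset (Mink d), ↑t ⊆ S → t.card ≤ d →
      (p + φ x + σ x • n) ∉ affineSpan ℝ (↑t : Set (Mink d)) := by
  classical
  set G : (Fin K → ℝ) → Mink d := fun x => p + φ x + σ x • n with hG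
  have hφc : Continuous φ := φ.continuous_of_finiteDimensional
  have hGc : Continuous G := by
    apply Continuous.add
    · exact continuous_const.add hφc
    · exact hσ.smul continuous_const
  set 𝒯 : Set (Finset (Mink d)) := {t | ↑t ⊆ S ∧ t.card ≤ d} with h𝒯
  have hcount : 𝒯.Countable := by
    have h1 : {A : Set (Mink d) | A.Finite ∧ A ⊆ S}.Countable :=
      Set.countable_setOf_finite_subset hS
    have h2 : ((fun t : Finset (Mink d) => (↑t : Set (Mink d))) ⁻¹'
        {A | A.Finite ∧ A ⊆ S}).Countable := h1.preimage Finset.coe_injective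
    have hsub𝒯 : 𝒯 ⊆ (fun t : Finset (Mink d) => (↑t : Set (Mink d))) ⁻¹'
        {A | A.Finite ∧ A ⊆ S} := fun t ht => ⟨t.finite_toSet, ht.1⟩
    exact Set.Countable.mono hsub𝒯 h2
  haveI : Countable ↥𝒯 := hcount.to_subtype
  set E : ↥𝒯 → Set (Fin K → ℝ) := fun t =>
    Metric.closedBall x₀ r ∩ G ⁻¹' (affineSpan ℝ (↑(t : Finset (Mink d)) : Set (Mink d))) with hE
  have hEclosed : ∀ t, IsClosed (E t) := by
    intro t
    exact Metric.isClosed_closedBall.inter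
      ((AffineSubspace.closed_of_finiteDimensional _).preimage hGc)
  have hEint : ∀ t, interior (E t) = ∅ := by
    rintro ⟨t, htS, htcard⟩
    by_contra hne
    obtain ⟨x₁, hx₁⟩ := Set.nonempty_iff_ne_empty.mpr hne
    obtain ⟨ρ, hρpos, hball⟩ := Metric.isOpen_iff.mp isOpen_interior x₁ hx₁
    have hballE : Metric.ball x₁ ρ ⊆ E ⟨t, htS, htcard⟩ := hball.trans interior_subset
    have hmem : ∀ x ∈ Metric.ball x₁ ρ, G x ∈ affineSpan ℝ (↑t : Set (Mink d)) :=
      fun x hx => (hballE hx).2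
    have hx₁mem := hmem x₁ (Metric.mem_ball_self hρpos)
    rcases Finset.eq_empty_or_nonempty t with rfl | htne
    · rw [Finset.coe_empty, AffineSubspace.span_empty] at hx₁mem
      exact hx₁mem
    set A'' : Submodule ℝ (Mink d) :=
      vectorSpan ℝ (↑t : Set (Mink d)) ⊔ Submodule.span ℝ {n} with hA''
    have hφmem : ∀ z ∈ Metric.ball (0 : Fin K → ℝ) ρ, φ z ∈ A'' := by
      intro z hz
      have hx : x₁ + z ∈ Metric.ball x₁ ρ := by
        rw [Metric.mem_ball, dist_eq_norm, add_sub_cancel_left]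
        rwa [Metric.mem_ball, dist_eq_norm, sub_zero] at hz
      have h1 : G (x₁ + z) -ᵥ G x₁ ∈ (affineSpan ℝ (↑t : Set (Mink d))).direction :=
        AffineSubspace.vsub_mem_direction (hmem _ hx) hx₁mem
      rw [direction_affineSpan] at h1
      have h2 : φ z = (G (x₁ + z) -ᵥ G x₁) - (σ (x₁ + z) - σ x₁) • n := by
        show φ z = (p + φ (x₁ + z) + σ (x₁ + z) • n) - (p + φ x₁ + σ x₁ • n)
          - (σ (x₁ + z) - σ x₁) • n
        rw [map_add, sub_smul]
        abel
      rw [h2]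
      exact Submodule.sub_mem _ (Submodule.mem_sup_left h1)
        (Submodule.mem_sup_right
          (Submodule.smul_mem _ _ (Submodule.mem_span_singleton_self n)))
    have hrange : LinearMap.range φ ≤ A'' := by
      rintro _ ⟨w, rfl⟩
      rcases eq_or_ne w 0 with rfl | hw
      · rw [map_zero]; exact A''.zero_mem
      · have hwn : 0 < ‖w‖ := norm_pos_iff.mpr hw
        set cc : ℝ := ρ / (2 * ‖w‖) with hcc
        have hccpos : 0 < cc := div_pos hρpos (by positivity)
        have hmemball : cc • w ∈ Metric.ball (0 : Fin K → ℝ) ρ := by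
          rw [Metric.mem_ball, dist_eq_norm, sub_zero, norm_smul,
            Real.norm_eq_abs, abs_of_pos hccpos, hcc]
          rw [div_mul_eq_mul_div, mul_comm]
          rw [div_lt_iff₀ (by positivity : (0:ℝ) < 2 * ‖w‖)]
          nlinarith
        have h3 := hφmem _ hmemball
        rw [map_smul] at h3
        have h4 := A''.smul_mem cc⁻¹ h3
        rwa [inv_smul_smul₀ (ne_of_gt hccpos)] at h4
    have hnmem : n ∈ A'' :=
      Submodule.mem_sup_right (Submodule.mem_span_singleton_self n)
    have hle : LinearMap.range φ ⊔ Submodule.span ℝ {n} ≤ A'' :=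
      sup_le hrange (Submodule.span_le.mpr (by simpa using hnmem))
    have hA''big : d + 1 ≤ finrank ℝ ↥A'' := hdim.trans (Submodule.finrank_mono hle)
    have hvs : finrank ℝ ↥(vectorSpan ℝ (↑t : Set (Mink d))) ≤ t.card - 1 := by
      obtain ⟨n0, hn0⟩ : ∃ n0, t.card = n0 + 1 :=
        ⟨t.card - 1, by have := Finset.card_pos.mpr htne; omega⟩
      have h5 := finrank_vectorSpan_image_finset_le ℝ (id : Mink d → Mink d) t hn0
      rw [Finset.image_id] at h5
      omega
    have hspan_n : finrank ℝ ↥(Submodule.span ℝ ({n} : Set (Mink d))) ≤ 1 := by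
      by_cases hn0 : n = 0
      · rw [hn0, Submodule.span_zero_singleton]
        simp
      · rw [finrank_span_singleton hn0]
    have hsum := Submodule.finrank_sup_add_finrank_inf_eq
      (vectorSpan ℝ (↑t : Set (Mink d))) (Submodule.span ℝ {n})
    have hsum' : finrank ℝ ↥A''
        + finrank ℝ ↥(vectorSpan ℝ (↑t : Set (Mink d)) ⊓ Submodule.span ℝ ({n} : Set (Mink d)))
        = finrank ℝ ↥(vectorSpan ℝ (↑t : Set (Mink d)))
          + finrank ℝ ↥(Submodule.span ℝ ({n} : Set (Mink d))) := hsum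
    have hcard1 : 1 ≤ t.card := Finset.card_pos.mpr htne
    omega
  have hdense : Dense (⋂ t, (E t)ᶜ) :=
    dense_iInter_of_isOpen (fun t => (hEclosed t).isOpen_compl)
      (fun t => interior_eq_empty_iff_dense_compl.mp (hEint t))
  obtain ⟨x, hxmem, hxball⟩ := hdense.exists_mem_open Metric.isOpen_ball
    (Metric.nonempty_ball.mpr hr)
  refine ⟨x, Metric.ball_subset_closedBall hxball, ?_⟩
  intro t htS htc hmem
  have hxE : x ∈ E ⟨t, htS, htc⟩ := ⟨Metric.ball_subset_closedBall hxball, hmem⟩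
  have := Set.mem_iInter.mp hxmem ⟨t, htS, htc⟩
  exact this hxE

/-- Extending a set in general position by a point avoiding all low-dimensional
affine spans of its finite subsets. -/
lemma genpos_insert (S : Set (Mink d)) (hgen : InGenPos d S) (u₀ : Mink d)
    (h : ∀ t : Finset (Mink d), ↑t ⊆ S → t.card ≤ d →
      u₀ ∉ affineSpan ℝ (↑t : Set (Mink d))) :
    InGenPos d (insert u₀ S) := by
  classical
  intro t' ht' hcard
  by_cases hsub : (↑t' : Set (Mink d)) ⊆ S
  · exact hgen t' hsub hcard
  by_cases hu₀S : u₀ ∈ S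
  · refine hgen t' ?_ hcard
    intro x hx
    rcases ht' hx with rfl | hxS
    · exact hu₀S
    · exact hxS
  have hu₀t' : u₀ ∈ t' := by
    by_contra hn
    apply hsub
    intro x hx
    rcases ht' hx with rfl | hxS
    · exact absurd hx hn
    · exact hxS
  set t : Finset (Mink d) := t'.erase u₀ with ht
  have htS : (↑t : Set (Mink d)) ⊆ S := by
    intro x hx
    rw [ht, Finset.coe_erase] at hx
    rcases ht' hx.1 with rfl | hxS
    · exact absurd rfl hx.2
    · exact hxS
  have htcard : t.card ≤ d := by
    rw [ht, Finset.card_erase_of_mem hu₀t']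
    omega
  have htind : AffineIndependent ℝ (fun x : ↥t => (x : Mink d)) :=
    hgen t htS (by omega)
  have hu₀span : u₀ ∉ affineSpan ℝ (↑t : Set (Mink d)) := h t htS htcard
  set i : ↥t' := ⟨u₀, hu₀t'⟩ with hi
  apply AffineIndependent.affineIndependent_of_notMem_span (i := i)
  · -- points other than u₀ are affinely independent
    have hmem' : ∀ y : {y : ↥t' // y ≠ i}, ((y : ↥t') : Mink d) ∈ t := fun y =>
      Finset.mem_erase.mpr ⟨fun hh => y.2 (Subtype.ext hh), (y : ↥t').2⟩
    have hinj : Function.Injective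
        (fun y : {y : ↥t' // y ≠ i} => (⟨((y : ↥t') : Mink d), hmem' y⟩ : ↥t)) := by
      intro a b hab
      have hval := congrArg (Subtype.val : {x : Mink d // x ∈ t} → Mink d) hab
      exact Subtype.ext (Subtype.ext hval)
    exact htind.comp_embedding ⟨_, hinj⟩
  · -- u₀ is not in the span of the others
    have himg : (fun x : ↥t' => (x : Mink d)) '' {x | x ≠ i} = (↑t : Set (Mink d)) := by
      ext z
      constructor
      · rintro ⟨x, hx, rfl⟩
        rw [ht, Finset.coe_erase]
        exact ⟨x.2, fun hz => hx (Subtype.ext hz)⟩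
      · intro hz
        rw [ht, Finset.coe_erase] at hz
        exact ⟨⟨z, hz.1⟩, fun hh => hz.2 (congrArg Subtype.val hh), rfl⟩
    rw [himg]
    exact hu₀span

set_option maxHeartbeats 1600000 in
/-- Core construction: the case `m = k + 1 ≥ 1`. -/
lemma core (d k : ℕ) (hk : k < d) (S : Set (Mink d))
    (hS : S.Countable) (hgen : InGenPos d S)
    (u : Fin (k + 1) → Mink d) (hu : Function.Injective u)
    (huS : ∀ i, u i ∈ S) (c : Fin (k + 1) → ℝ) :
    ∃ u₀ : Mink d,
      (∀ i, mform d (u₀ - u i) (u₀ - u i) = c i) ∧ InGenPos d (insert u₀ S) := by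
  classical
  -- affine independence of the base points
  have haff : AffineIndependent ℝ u := by
    have hmem : ∀ i, u i ∈ Finset.image u Finset.univ := fun i =>
      Finset.mem_image.mpr ⟨i, Finset.mem_univ i, rfl⟩
    have h1 := hgen (Finset.image u Finset.univ)
      (by
        intro x hx
        obtain ⟨i, _, rfl⟩ := Finset.mem_image.mp hx
        exact huS i)
      (by
        rw [Finset.card_image_of_injective _ hu, Finset.card_fin]
        omega)
    have hinj : Function.Injective
        (fun i : Fin (k+1) => (⟨u i, hmem i⟩ : ↥(Finset.image u Finset.univ))) := by
      intro a b hab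
      exact hu (congrArg (Subtype.val : ↥(Finset.image u Finset.univ) → Mink d) hab)
    exact h1.comp_embedding ⟨_, hinj⟩
  -- the difference vectors are linearly independent
  set v : Fin k → Mink d := fun i => u i.succ - u 0 with hv
  have hlin : LinearIndependent ℝ v := by
    have h1 := (affineIndependent_iff_linearIndependent_vsub ℝ u 0).mp haff
    have hinj : Function.Injective
        (fun i : Fin k => (⟨i.succ, Fin.succ_ne_zero i⟩ : {x : Fin (k+1) // x ≠ 0})) := by
      intro a b hab
      exact Fin.succ_injective _ (congrArg Subtype.val hab)
    have h2 := h1.comp _ hinj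
    exact h2
  -- the linear constraint map and its kernel
  set T : Mink d →ₗ[ℝ] (Fin k → ℝ) := LinearMap.pi (fun i => (B d).flip (v i)) with hT
  have hTapp : ∀ (w : Mink d) (i : Fin k), T w i = mform d w (v i) := fun w i => rfl
  have hTsurj := T_surj v hlin
  set e : Fin k → ℝ := fun i => (c 0 + mform d (v i) (v i) - c i.succ) / 2 with he
  obtain ⟨w₀, hw₀⟩ := hTsurj e
  set W : Submodule ℝ (Mink d) := LinearMap.ker T with hW
  have hWdim : d + 1 ≤ finrank ℝ ↥W := by
    have h1 := T.finrank_range_add_finrank_ker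
    have h2 : finrank ℝ ↥(LinearMap.range T) ≤ k := by
      have h3 := Submodule.finrank_le (LinearMap.range T)
      rwa [Module.finrank_pi, Fintype.card_fin] at h3
    rw [rankMink] at h1
    have h1' : finrank ℝ ↥(LinearMap.range T) + finrank ℝ ↥W = 2 * d := h1
    omega
  obtain ⟨nn, hnnW, hnnpos⟩ := exists_pos W hWdim
  obtain ⟨zm, hzmW, hzmneg⟩ := exists_neg W hWdim
  set qn : ℝ := mform d nn nn with hqn
  have hqn0 : qn ≠ 0 := ne_of_gt hnnpos
  have hnn0 : nn ≠ 0 := by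
    intro hh
    rw [hqn, hh, mform_zero_self] at hnnpos
    exact lt_irrefl _ hnnpos
  -- the hyperplane of W orthogonal to nn
  set Hsub : Submodule ℝ (Mink d) := W ⊓ LinearMap.ker (B d nn) with hHsub
  have hHW : Hsub ≤ W := inf_le_left
  have hHperp : ∀ y ∈ Hsub, mform d nn y = 0 := fun y hy => hy.2
  have hdecomp : ∀ z ∈ W, z - (mform d nn z / qn) • nn ∈ Hsub := by
    intro z hz
    constructor
    · exact W.sub_mem hz (W.smul_mem _ hnnW)
    · show B d nn (z - (mform d nn z / qn) • nn) = 0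
      rw [map_sub, map_smul]
      show mform d nn z - (mform d nn z / qn) • mform d nn nn = 0
      rw [smul_eq_mul, ← hqn]
      rw [div_mul_cancel₀ _ hqn0, sub_self]
  have hsupW : Hsub ⊔ Submodule.span ℝ {nn} = W := by
    apply le_antisymm
    · exact sup_le hHW (Submodule.span_le.mpr (by simpa using hnnW))
    · intro z hz
      have h1 := hdecomp z hz
      have h2 : z = (z - (mform d nn z / qn) • nn) + (mform d nn z / qn) • nn := by abel
      rw [h2]
      exact Submodule.add_mem _ (Submodule.mem_sup_left h1)
        (Submodule.mem_sup_right
          (Submodule.smul_mem _ _ (Submodule.mem_span_singleton_self nn)))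
  have hdisj : Hsub ⊓ Submodule.span ℝ {nn} = ⊥ := by
    rw [Submodule.eq_bot_iff]
    rintro z ⟨hz1, hz2⟩
    obtain ⟨a, rfl⟩ := Submodule.mem_span_singleton.mp hz2
    have h1 := hHperp _ hz1
    rw [mform_smul_right] at h1
    rcases mul_eq_zero.mp h1 with h2 | h2
    · rw [h2, zero_smul]
    · exact absurd h2 hqn0
  have hKdim : d ≤ finrank ℝ ↥Hsub := by
    have h1 := Submodule.finrank_sup_add_finrank_inf_eq Hsub (Submodule.span ℝ {nn})
    rw [hsupW, hdisj, finrank_bot, finrank_span_singleton hnn0] at h1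
    omega
  -- a vector of Hsub with negative square
  set ym : Mink d := zm - (mform d nn zm / qn) • nn with hym
  have hymH : ym ∈ Hsub := hdecomp zm hzmW
  have hymneg : mform d ym ym < 0 := by
    set γ : ℝ := mform d nn zm / qn with hγ
    have hzm_eq : zm = ym + γ • nn := by rw [hym]; abel
    have hexp : mform d zm zm
        = mform d ym ym + 2 * (γ * mform d ym nn) + γ * (γ * qn) := by
      conv_lhs => rw [hzm_eq]
      rw [mform_add_self, mform_smul_right, mform_smul_left, mform_smul_right, hqn]
    have hperp : mform d ym nn = 0 := by rw [mform_comm]; exact hHperp _ hymH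
    rw [hperp] at hexp
    nlinarith [mul_self_nonneg γ, hnnpos, hzmneg]
  -- the discriminant function
  set β : ℝ := mform d w₀ nn with hβ
  set δf : Mink d → ℝ :=
    fun y => β ^ 2 - qn * (mform d (w₀ + y) (w₀ + y) - c 0) with hδf
  -- continuity
  have hmc : Continuous (fun y : Mink d => mform d (w₀ + y) (w₀ + y)) := by
    have h1 : Continuous (fun y : Mink d => (w₀ + y).1) :=
      continuous_const.add continuous_fst
    have h2 : Continuous (fun y : Mink d => (w₀ + y).2) :=
      continuous_const.add continuous_snd
    exact (h1.inner h1).sub (h2.inner h2)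
  have hδc : Continuous δf := continuous_const.sub
    (continuous_const.mul (hmc.sub continuous_const))
  -- a point with positive discriminant
  have hy₀ : ∃ tt : ℝ, 0 < δf (tt • ym) := by
    obtain ⟨tt, htt⟩ := quad_pos
      (a := -qn * mform d ym ym)
      (b := -qn * (2 * mform d w₀ ym))
      (c := β ^ 2 - qn * (mform d w₀ w₀ - c 0))
      (by nlinarith [hnnpos, hymneg])
    refine ⟨tt, ?_⟩
    have hexp : mform d (w₀ + tt • ym) (w₀ + tt • ym)
        = mform d w₀ w₀ + 2 * (tt * mform d w₀ ym) + tt * (tt * mform d ym ym) := by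
      rw [mform_add_self, mform_smul_right, mform_smul_left, mform_smul_right]
    rw [hδf]
    simp only []
    rw [hexp]
    nlinarith [htt]
  obtain ⟨tt, htt⟩ := hy₀
  set y₀ : Mink d := tt • ym with hy₀def
  have hy₀H : y₀ ∈ Hsub := Hsub.smul_mem tt hymH
  -- the parametrization of Hsub
  set K : ℕ := finrank ℝ ↥Hsub with hKdef
  set bb : Basis (Fin K) ℝ ↥Hsub := Module.finBasis ℝ ↥Hsub with hbb
  set φ : (Fin K → ℝ) →ₗ[ℝ] Mink d :=
    Hsub.subtype ∘ₗ (bb.equivFun.symm : (Fin K → ℝ) ≃ₗ[ℝ] ↥Hsub).toLinearMap with hφ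
  have hφmem : ∀ x, φ x ∈ Hsub := fun x => (bb.equivFun.symm x).2
  have hφrange : LinearMap.range φ = Hsub := by
    rw [hφ, LinearMap.range_comp, LinearEquiv.range, Submodule.map_top,
      Submodule.range_subtype]
  set s : Mink d → ℝ := fun y => (-β + Real.sqrt (δf y)) / qn with hs
  set σ : (Fin K → ℝ) → ℝ := fun x => s (φ x) with hσ
  have hφc : Continuous φ := φ.continuous_of_finiteDimensional
  have hσc : Continuous σ := by
    apply Continuous.div_const
    exact continuous_const.add ((Real.continuous_sqrt).comp (hδc.comp hφc))
  -- the region of positive discriminant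
  set x₀ : Fin K → ℝ := bb.equivFun ⟨y₀, hy₀H⟩ with hx₀
  have hφx₀ : φ x₀ = y₀ := by
    rw [hφ, hx₀]
    show Hsub.subtype (bb.equivFun.symm (bb.equivFun ⟨y₀, hy₀H⟩)) = y₀
    rw [LinearEquiv.symm_apply_apply]
    rfl
  have hΩopen : IsOpen {x : Fin K → ℝ | 0 < δf (φ x)} :=
    isOpen_lt continuous_const (hδc.comp hφc)
  have hx₀Ω : x₀ ∈ {x : Fin K → ℝ | 0 < δf (φ x)} := by
    show 0 < δf (φ x₀)
    rw [hφx₀]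
    exact htt
  obtain ⟨ε, hεpos, hball⟩ := Metric.isOpen_iff.mp hΩopen x₀ hx₀Ω
  -- apply the avoidance lemma
  have hdim : d + 1 ≤ finrank ℝ ↥(LinearMap.range φ ⊔ Submodule.span ℝ {nn}) := by
    rw [hφrange, hsupW]
    exact hWdim
  obtain ⟨x, hxball, havoid⟩ :=
    avoid S hS (u 0 + w₀) nn φ σ hσc hdim x₀ (half_pos hεpos)
  have hxΩ : 0 < δf (φ x) :=
    hball (Metric.closedBall_subset_ball (by linarith) hxball)
  -- the new point
  set y : Mink d := φ x with hy
  have hyH : y ∈ Hsub := hφmem x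
  have hyW : y ∈ W := hHW hyH
  set sy : ℝ := σ x with hsy
  set u₀ : Mink d := u 0 + w₀ + φ x + σ x • nn with hu₀
  have hu₀w : u₀ = u 0 + (w₀ + y + sy • nn) := by rw [hu₀]; abel
  set w : Mink d := w₀ + y + sy • nn with hwdef
  have hδge : 0 ≤ δf y := le_of_lt hxΩ
  have hsqrt : Real.sqrt (δf y) ^ 2 = δf y := Real.sq_sqrt hδge
  have hsy_eq : sy = (-β + Real.sqrt (δf y)) / qn := rfl
  -- the quadratic constraint
  have hyperp : mform d y nn = 0 := by rw [mform_comm]; exact hHperp _ hyH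
  have hQw : mform d w w = c 0 := by
    have hexp : mform d w w
        = mform d (w₀ + y) (w₀ + y) + 2 * (sy * (β + mform d y nn))
          + sy * (sy * qn) := by
      rw [hwdef, mform_add_self, mform_smul_right, mform_smul_left, mform_smul_right,
        mform_add_left, hqn, hβ]
      rw [mform_add_left]
    rw [hyperp] at hexp
    have hδf_eq : δf y = β ^ 2 - qn * (mform d (w₀ + y) (w₀ + y) - c 0) := rfl
    rw [hexp, hsy_eq]
    field_simp
    nlinarith [hsqrt, hδf_eq]
  -- the linear constraints
  have hTw : ∀ i : Fin k, mform d w (v i) = e i := by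
    intro i
    have h1 : w = w₀ + (y + sy • nn) := by rw [hwdef]; abel
    have h2 : y + sy • nn ∈ W := W.add_mem hyW (W.smul_mem sy hnnW)
    have h3 : T (y + sy • nn) = 0 := h2
    have h4 : mform d (y + sy • nn) (v i) = 0 := by
      rw [← hTapp]
      rw [h3]
      rfl
    rw [h1, mform_add_left, h4, ← hTapp, hw₀, add_zero]
  refine ⟨u₀, ?_, ?_⟩
  · -- distance constraints
    intro i
    induction i using Fin.cases with
    | zero =>
      have h1 : u₀ - u 0 = w := by rw [hu₀w]; abel
      rw [h1]
      exact hQw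
    | succ i =>
      have h1 : u₀ - u i.succ = w - v i := by
        rw [hu₀w, hv]
        show u 0 + w - u i.succ = w - (u i.succ - u 0)
        abel
      rw [h1, mform_sub_self, hQw, hTw i, he]
      show c 0 - 2 * ((c 0 + mform d (v i) (v i) - c i.succ) / 2)
          + mform d (v i) (v i) = c i.succ
      ring
  · -- general position
    apply genpos_insert S hgen
    intro t htS htc
    exact havoid t htS htc

end SVEaux

theorem single_vertex_extension (d : ℕ) (hd : 1 ≤ d) (S : Set (Mink d))
    (hS : S.Countable) (hgen : InGenPos d S)
    (m : ℕ) (hm : m ≤ d) (u : Fin m → Mink d) (hu : Function.Injective u)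
    (huS : ∀ i : Fin m, u i ∈ S) (c : Fin m → ℝ) :
    ∃ u₀ : Mink d,
      (∀ i : Fin m, mform d (u₀ - u i) (u₀ - u i) = c i) ∧
      InGenPos d (insert u₀ S) := by
  classical
  rcases m with _ | k
  · -- no constraints
    rcases Set.eq_empty_or_nonempty S with rfl | ⟨s₀, hs₀⟩
    · refine ⟨0, fun i => i.elim0, ?_⟩
      intro t ht _
      have hsub : ∀ x : ↥t, (x : Mink d) = 0 := by
        intro x
        have h1 := ht x.2
        simpa using h1
      haveI : Subsingleton ↥t :=
        ⟨fun a b => Subtype.ext (by rw [hsub a, hsub b])⟩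
      exact affineIndependent_of_subsingleton ℝ _
    · obtain ⟨u₀, _, h2⟩ := SVEaux.core d 0 hd S hS hgen (fun _ => s₀)
        (fun a b _ => by have h1 := a.isLt; have h2 := b.isLt; exact Fin.ext (by omega)) (fun _ => hs₀) (fun _ => 0)
      exact ⟨u₀, fun i => i.elim0, h2⟩
  · exact SVEaux.core d k (by omega) S hS hgen u hu huS c
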